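/- Consider the birth-death chain on {0,1,...,n} modeling the Clique vs Undirected Star process: backward biases γ_1 = 1/r and γ_k = (k−1)/r for 2 ≤ k ≤ n−1. Then the absorption-at-n probability starting from state 1 equals 1/(1 + (1/r) + (1/r²) + Σ_{k=3}^{n−1}(k−2)!/r^k · r) and in particular is at most r^{n−1}/(n−2)!. -/

import Mathlib

/-- **Clique vs Star birth-death formula.**
For the birth-death chain on `{0,...,n}` modeling the Clique vs Undirected Star process,
with backward biases `γ 1 = 1/r` and `γ k = (k−1)/r` for `2 ≤ k ≤ n−1`, the
absorption-at-`n` probability starting from state `1` equals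
`1/(1 + Σ_{j=1}^{n−1} (j−1)!/r^j)` and in particular is at most `r^{n−1}/(n−2)!`. -/
theorem clique_vs_star_upper_bound
    (n : ℕ) (hn : 3 ≤ n) (r : ℝ) (hr : 0 < r) (γ : ℕ → ℝ)
    (hγ1 : γ 1 = 1 / r)
    (hγ : ∀ k, 2 ≤ k → k ≤ n - 1 → γ k = ((k : ℝ) - 1) / r)
    (f : ℝ)
    (hf : f = 1 / (1 + ∑ j ∈ Finset.Icc 1 (n - 1), ∏ k ∈ Finset.Icc 1 j, γ k)) :
    f = 1 / (1 + ∑ j ∈ Finset.Icc 1 (n - 1), ((Nat.factorial (j - 1) : ℝ)) / r ^ j) ∧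
    f ≤ r ^ (n - 1) / ((Nat.factorial (n - 2) : ℝ)) := by
  have hprod : ∀ j, 1 ≤ j → j ≤ n - 1 →
      ∏ k ∈ Finset.Icc 1 j, γ k = (Nat.factorial (j - 1) : ℝ) / r ^ j := by
    intro j hj1 hjn
    induction j with
    | zero => omega
    | succ m ih =>
      rcases Nat.eq_or_lt_of_le hj1 with h1 | h1
      · simp [← h1, hγ1, Nat.factorial]
      · have hm1 : 1 ≤ m := by omega
        have hmn : m ≤ n - 1 := by omega
        rw [Finset.prod_Icc_succ_top (by omega), ih hm1 hmn,
          hγ (m + 1) (by omega) hjn]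
        have : ((m + 1 : ℕ) : ℝ) - 1 = (m : ℝ) := by push_cast; ring
        rw [this]
        have hfac : (Nat.factorial (m + 1 - 1) : ℝ)
            = (Nat.factorial (m - 1) : ℝ) * m := by
          have : m - 1 + 1 = m := by omega
          rw [show m + 1 - 1 = m from rfl, ← this, Nat.factorial_succ]
          push_cast [this]; ring
        rw [hfac]
        field_simp
        ring
    -- end
  have hsum : ∑ j ∈ Finset.Icc 1 (n - 1), ∏ k ∈ Finset.Icc 1 j, γ k
      = ∑ j ∈ Finset.Icc 1 (n - 1), (Nat.factorial (j - 1) : ℝ) / r ^ j := by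
    apply Finset.sum_congr rfl
    intro j hj
    simp only [Finset.mem_Icc] at hj
    exact hprod j hj.1 hj.2
  have heq : f = 1 / (1 + ∑ j ∈ Finset.Icc 1 (n - 1),
      (Nat.factorial (j - 1) : ℝ) / r ^ j) := by rw [hf, hsum]
  refine ⟨heq, ?_⟩
  set S := ∑ j ∈ Finset.Icc 1 (n - 1), (Nat.factorial (j - 1) : ℝ) / r ^ j with hS
  have hlast : (Nat.factorial (n - 2) : ℝ) / r ^ (n - 1) ≤ S := by
    have hmem : n - 1 ∈ Finset.Icc 1 (n - 1) := by
      simp only [Finset.mem_Icc]; omega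
    have := Finset.single_le_sum
      (f := fun j => (Nat.factorial (j - 1) : ℝ) / r ^ j)
      (fun i _ => by positivity) hmem
    simpa [show n - 1 - 1 = n - 2 from by omega] using this
  have hpos : (0:ℝ) < (Nat.factorial (n - 2) : ℝ) / r ^ (n - 1) := by positivity
  have h1S : (Nat.factorial (n - 2) : ℝ) / r ^ (n - 1) ≤ 1 + S := by
    nlinarith
  calc f = 1 / (1 + S) := heq
    _ ≤ 1 / ((Nat.factorial (n - 2) : ℝ) / r ^ (n - 1)) :=
        one_div_le_one_div_of_le hpos h1S
    _ = r ^ (n - 1) / (Nat.factorial (n - 2) : ℝ) := one_div_div _ _
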